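/- Lipschitz dependence of the prefix-MoE regression function on its prompt parameters: there exists a constant C₁ > 0, depending only on the fixed quantities (d, N, L', Ω, the support bound of μ, A^0_j, a^0_j, h_j, B, C), such that for any two mixing measures Ḡ = Σ_{i=1}^{L'} exp(b_i) δ_{p_i} and Ǧ = Σ_{i=1}^{L'} exp(b̌_i) δ_{p̌_i}, each with L' atoms in Ω, one has ‖f_Ḡ − f_Ǧ‖_{L²(μ)} ≤ C₁ · Σ_{i=1}^{L'} (‖p_i − p̌_i‖ + |b_i − b̌_i|). -/

import Mathlib

/-!
Statement 10: Lipschitz dependence of the prefix-MoE regression function on its prompt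
parameters: `‖f_Ḡ − f_Ǧ‖_{L²(μ)} ≤ C₁ · Σᵢ (‖pᵢ − p̌ᵢ‖ + |bᵢ − b̌ᵢ|)` for mixing measures
with `L'` atoms in `Ω`.
-/

open MeasureTheory ProbabilityTheory Real
open scoped NNReal ENNReal

noncomputable section

/-- `ℝ^d` with the Euclidean norm. -/
abbrev Vec (d : ℕ) := EuclideanSpace ℝ (Fin d)

/-- The quadratic form `X ⊤ A X`. -/
def quadForm {d : ℕ} (A : Matrix (Fin d) (Fin d) ℝ) (X : Vec d) : ℝ :=
  ∑ k, ∑ l, X k * A k l * X l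

/-- The bilinear form `(B p)ᵀ X`. -/
def bilin {d : ℕ} (B : Matrix (Fin d) (Fin d) ℝ) (p X : Vec d) : ℝ :=
  ∑ k, (∑ l, B k l * p l) * X k

/-- The product `C p` of a row vector `C` and a column vector `p`. -/
def rowMul {d : ℕ} (C p : Vec d) : ℝ := ∑ k, C k * p k

/-- The prefix-MoE regression function in the simple linear shared-structure setting,
for the mixing measure with atoms `(b i, p i)`, `i : Fin m`. -/
def moeLin {d N : ℕ} (A : Fin N → Matrix (Fin d) (Fin d) ℝ) (a : Fin N → ℝ)
    (h : Fin N → Vec d → ℝ) (B : Matrix (Fin d) (Fin d) ℝ) (C : Vec d)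
    {m : ℕ} (b : Fin m → ℝ) (p : Fin m → Vec d) (X : Vec d) : ℝ :=
  ((∑ j, Real.exp (quadForm (A j) X + a j) * h j X) +
      ∑ i, Real.exp (bilin B (p i) X + b i) * rowMul C (p i)) /
    ((∑ j, Real.exp (quadForm (A j) X + a j)) +
      ∑ i, Real.exp (bilin B (p i) X + b i))

lemma coord_abs_le_norm {d : ℕ} (x : Vec d) (k : Fin d) : |x k| ≤ ‖x‖ := by
  rw [EuclideanSpace.norm_eq]
  have : |x k| = Real.sqrt (‖x k‖ ^ 2) := by
    rw [Real.sqrt_sq_eq_abs, Real.norm_eq_abs, abs_abs]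
  rw [this]
  apply Real.sqrt_le_sqrt
  exact Finset.single_le_sum (f := fun i => ‖x i‖ ^ 2) (fun i _ => sq_nonneg _)
    (Finset.mem_univ k)

lemma exp_lip {M s t : ℝ} (hs : s ≤ M) (ht : t ≤ M) :
    |Real.exp s - Real.exp t| ≤ Real.exp M * |s - t| := by
  wlog hst : t ≤ s generalizing s t
  · rw [abs_sub_comm, abs_sub_comm s t]; exact this ht hs (le_of_not_ge hst)
  rw [abs_of_nonneg (sub_nonneg.2 (Real.exp_le_exp.2 hst)), abs_of_nonneg (sub_nonneg.2 hst)]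
  have h3 : Real.exp (-(s - t)) * Real.exp (s - t) = 1 := by
    rw [← Real.exp_add]; simp
  have h2 : Real.exp (s - t) - 1 ≤ (s - t) * Real.exp (s - t) := by
    nlinarith [Real.add_one_le_exp (-(s - t)), Real.exp_pos (s - t)]
  have h1 : Real.exp s - Real.exp t = Real.exp t * (Real.exp (s - t) - 1) := by
    rw [mul_sub, mul_one, ← Real.exp_add]; ring_nf
  calc Real.exp s - Real.exp t ≤ Real.exp t * ((s - t) * Real.exp (s - t)) := by
        rw [h1]; exact mul_le_mul_of_nonneg_left h2 (Real.exp_pos t).le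
    _ = Real.exp (t + (s - t)) * (s - t) := by rw [Real.exp_add]; ring
    _ ≤ Real.exp M * (s - t) := by
        have he : t + (s - t) = s := by ring
        rw [he]
        exact mul_le_mul_of_nonneg_right (Real.exp_le_exp.2 hs) (sub_nonneg.2 hst)

lemma bilin_abs_le {d : ℕ} (B : Matrix (Fin d) (Fin d) ℝ) (p X : Vec d) :
    |bilin B p X| ≤ (∑ k, ∑ l, |B k l|) * (‖p‖ * ‖X‖) := by
  have hp : ∀ l, |p l| ≤ ‖p‖ := fun l => coord_abs_le_norm p l
  have hX : ∀ k, |X k| ≤ ‖X‖ := fun k => coord_abs_le_norm X k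
  calc |bilin B p X| ≤ ∑ k, |(∑ l, B k l * p l) * X k| := Finset.abs_sum_le_sum_abs _ _
    _ ≤ ∑ k, (∑ l, |B k l|) * (‖p‖ * ‖X‖) := by
        apply Finset.sum_le_sum; intro k _
        rw [abs_mul]
        have hk : |∑ l, B k l * p l| ≤ ∑ l, |B k l| * ‖p‖ := by
          calc |∑ l, B k l * p l| ≤ ∑ l, |B k l * p l| := Finset.abs_sum_le_sum_abs _ _
            _ ≤ ∑ l, |B k l| * ‖p‖ := by
                apply Finset.sum_le_sum; intro l _
                rw [abs_mul]; exact mul_le_mul_of_nonneg_left (hp l) (abs_nonneg _)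
        calc |∑ l, B k l * p l| * |X k| ≤ (∑ l, |B k l| * ‖p‖) * ‖X‖ := by
              apply mul_le_mul hk (hX k) (abs_nonneg _)
              positivity
          _ = (∑ l, |B k l|) * (‖p‖ * ‖X‖) := by rw [← Finset.sum_mul]; ring
    _ = (∑ k, ∑ l, |B k l|) * (‖p‖ * ‖X‖) := by rw [← Finset.sum_mul]

lemma quad_abs_le {d : ℕ} (A : Matrix (Fin d) (Fin d) ℝ) (X : Vec d) :
    |quadForm A X| ≤ (∑ k, ∑ l, |A k l|) * (‖X‖ * ‖X‖) := by
  have hX : ∀ k, |X k| ≤ ‖X‖ := fun k => coord_abs_le_norm X k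
  calc |quadForm A X| ≤ ∑ k, |∑ l, X k * A k l * X l| := Finset.abs_sum_le_sum_abs _ _
    _ ≤ ∑ k, (∑ l, |A k l|) * (‖X‖ * ‖X‖) := by
        apply Finset.sum_le_sum; intro k _
        calc |∑ l, X k * A k l * X l| ≤ ∑ l, |X k * A k l * X l| := Finset.abs_sum_le_sum_abs _ _
          _ ≤ ∑ l, |A k l| * (‖X‖ * ‖X‖) := by
              apply Finset.sum_le_sum; intro l _
              rw [abs_mul, abs_mul]
              have h1 : |X k| * |A k l| * |X l| ≤ ‖X‖ * |A k l| * ‖X‖ := by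
                apply mul_le_mul (mul_le_mul_of_nonneg_right (hX k) (abs_nonneg _)) (hX l)
                  (abs_nonneg _)
                positivity
              calc |X k| * |A k l| * |X l| ≤ ‖X‖ * |A k l| * ‖X‖ := h1
                _ = |A k l| * (‖X‖ * ‖X‖) := by ring
          _ = (∑ l, |A k l|) * (‖X‖ * ‖X‖) := by rw [← Finset.sum_mul]
    _ = (∑ k, ∑ l, |A k l|) * (‖X‖ * ‖X‖) := by rw [← Finset.sum_mul]

lemma rowMul_abs_le {d : ℕ} (C p : Vec d) : |rowMul C p| ≤ (∑ k, |C k|) * ‖p‖ := by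
  have hp : ∀ l, |p l| ≤ ‖p‖ := fun l => coord_abs_le_norm p l
  calc |rowMul C p| ≤ ∑ k, |C k * p k| := Finset.abs_sum_le_sum_abs _ _
    _ ≤ ∑ k, |C k| * ‖p‖ := by
        apply Finset.sum_le_sum; intro k _
        rw [abs_mul]; exact mul_le_mul_of_nonneg_left (hp k) (abs_nonneg _)
    _ = (∑ k, |C k|) * ‖p‖ := by rw [← Finset.sum_mul]

lemma bilin_sub {d : ℕ} (B : Matrix (Fin d) (Fin d) ℝ) (p p' X : Vec d) :
    bilin B p X - bilin B p' X = bilin B (p - p') X := by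
  unfold bilin
  rw [← Finset.sum_sub_distrib]
  apply Finset.sum_congr rfl; intro k _
  rw [← sub_mul, ← Finset.sum_sub_distrib]
  congr 1
  apply Finset.sum_congr rfl; intro l _
  have : (p - p') l = p l - p' l := rfl
  rw [this]; ring

lemma rowMul_sub {d : ℕ} (C p p' : Vec d) :
    rowMul C p - rowMul C p' = rowMul C (p - p') := by
  unfold rowMul
  rw [← Finset.sum_sub_distrib]
  apply Finset.sum_congr rfl; intro k _
  have : (p - p') k = p k - p' k := rfl
  rw [this]; ring

set_option maxHeartbeats 1000000

theorem moe_lipschitz_in_parameters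
    (d N L' : ℕ)
    (Ω : Set (ℝ × Vec d)) (hΩ : IsCompact Ω)
    (A : Fin N → Matrix (Fin d) (Fin d) ℝ) (a : Fin N → ℝ)
    (h : Fin N → Vec d → ℝ) (hmeas : ∀ j, Measurable (h j))
    (hbdd : ∀ j, ∃ M, ∀ X, |h j X| ≤ M)
    (B : Matrix (Fin d) (Fin d) ℝ) (C : Vec d)
    (μ : Measure (Vec d)) [IsProbabilityMeasure μ]
    (hsupp : ∃ R, ∀ᵐ X ∂μ, ‖X‖ ≤ R) :
    ∃ C₁ > (0 : ℝ),
      ∀ (b : Fin L' → ℝ) (p : Fin L' → Vec d) (b' : Fin L' → ℝ) (p' : Fin L' → Vec d),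
        (∀ i, (b i, p i) ∈ Ω) → (∀ i, (b' i, p' i) ∈ Ω) →
        eLpNorm (fun X => moeLin A a h B C b p X - moeLin A a h B C b' p' X) 2 μ ≤
          ENNReal.ofReal (C₁ * ∑ i, (‖p i - p' i‖ + |b i - b' i|)) := by
  classical
  choose Mh hMh using hbdd
  obtain ⟨R, hR, hRae⟩ : ∃ R, 0 ≤ R ∧ ∀ᵐ X ∂μ, ‖X‖ ≤ R := by
    obtain ⟨R₀, hR₀⟩ := hsupp
    exact ⟨max R₀ 0, le_max_right _ _,
      hR₀.mono fun X hX => hX.trans (le_max_left _ _)⟩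
  obtain ⟨K, hK, hΩK⟩ : ∃ K, 0 ≤ K ∧ ∀ q ∈ Ω, |q.1| ≤ K ∧ ‖q.2‖ ≤ K := by
    obtain ⟨r, hr⟩ := hΩ.isBounded.subset_closedBall (0 : ℝ × Vec d)
    refine ⟨max r 0, le_max_right _ _, fun q hq => ?_⟩
    have hq' : ‖q‖ ≤ r := by
      simpa [Metric.mem_closedBall, dist_zero_right] using hr hq
    constructor
    · have := (norm_fst_le q).trans (hq'.trans (le_max_left r 0))
      rwa [Real.norm_eq_abs] at this
    · exact (norm_snd_le q).trans (hq'.trans (le_max_left r 0))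
  obtain ⟨CB, hCB0, hCBle⟩ : ∃ CB, 0 ≤ CB ∧
      ∀ p X : Vec d, |bilin B p X| ≤ CB * (‖p‖ * ‖X‖) :=
    ⟨∑ k, ∑ l, |B k l|,
      Finset.sum_nonneg fun _ _ => Finset.sum_nonneg fun _ _ => abs_nonneg _,
      fun p X => bilin_abs_le B p X⟩
  obtain ⟨CC, hCC0, hCCle⟩ : ∃ CC, 0 ≤ CC ∧ ∀ p : Vec d, |rowMul C p| ≤ CC * ‖p‖ :=
    ⟨∑ k, |C k|, Finset.sum_nonneg fun _ _ => abs_nonneg _, fun p => rowMul_abs_le C p⟩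
  obtain ⟨MH, hMH0, hMHle⟩ : ∃ MH, 0 ≤ MH ∧ ∀ X : Vec d, ‖X‖ ≤ R →
      |∑ j, Real.exp (quadForm (A j) X + a j) * h j X| ≤ MH := by
    refine ⟨∑ j, Real.exp ((∑ k, ∑ l, |A j k l|) * (R * R) + |a j|) * max (Mh j) 0,
      Finset.sum_nonneg fun j _ => mul_nonneg (Real.exp_pos _).le (le_max_right _ _),
      fun X hX => ?_⟩
    refine (Finset.abs_sum_le_sum_abs _ _).trans ?_
    refine Finset.sum_le_sum fun j _ => ?_
    rw [abs_mul, abs_of_pos (Real.exp_pos _)]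
    apply mul_le_mul _ ((hMh j X).trans (le_max_left _ _)) (abs_nonneg _)
      (Real.exp_pos _).le
    apply Real.exp_le_exp.2
    have hq : quadForm (A j) X ≤ (∑ k, ∑ l, |A j k l|) * (R * R) := by
      refine (le_abs_self _).trans ((quad_abs_le (A j) X).trans ?_)
      apply mul_le_mul_of_nonneg_left
        (mul_le_mul hX hX (norm_nonneg _) hR)
        (Finset.sum_nonneg fun _ _ => Finset.sum_nonneg fun _ _ => abs_nonneg _)
    exact add_le_add hq (le_abs_self _)
  set M0 : ℝ := CB * (K * R) + K with hM0def
  have hM00 : 0 ≤ M0 := add_nonneg (mul_nonneg hCB0 (mul_nonneg hK hR)) hK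
  set δ : ℝ := Real.exp (-M0) with hδdef
  have hδ : 0 < δ := Real.exp_pos _
  set MT : ℝ := L' * (Real.exp M0 * (CC * K)) with hMTdef
  have hMT0 : 0 ≤ MT :=
    mul_nonneg (Nat.cast_nonneg _)
      (mul_nonneg (Real.exp_pos _).le (mul_nonneg hCC0 hK))
  set MF : ℝ := MH + MT with hMFdef
  have hMF0 : 0 ≤ MF := add_nonneg hMH0 hMT0
  set L1 : ℝ := Real.exp M0 * (CB * R + 1) with hL1def
  have hL1 : 0 < L1 := by
    have h1 : (0:ℝ) < CB * R + 1 := by nlinarith [mul_nonneg hCB0 hR]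
    exact mul_pos (Real.exp_pos _) h1
  set L2 : ℝ := L1 * (CC * K) + Real.exp M0 * CC with hL2def
  have hL2 : 0 ≤ L2 :=
    add_nonneg (mul_nonneg hL1.le (mul_nonneg hCC0 hK))
      (mul_nonneg (Real.exp_pos _).le hCC0)
  set C0 : ℝ := (L2 + MF * L1 / δ) / δ with hC0def
  have hC00 : 0 ≤ C0 :=
    div_nonneg (add_nonneg hL2 (div_nonneg (mul_nonneg hMF0 hL1.le) hδ.le)) hδ.le
  clear_value M0 δ MT MF L1 L2 C0
  refine ⟨max C0 1, lt_of_lt_of_le one_pos (le_max_right _ _), ?_⟩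
  intro b p b' p' hbp hbp'
  rcases Nat.eq_zero_or_pos L' with hL0 | hL
  · subst hL0
    have hz : (fun X => moeLin A a h B C b p X - moeLin A a h B C b' p' X) =
        (0 : Vec d → ℝ) := by
      funext X
      simp [moeLin]
    rw [hz, eLpNorm_zero]
    exact zero_le
  set Δ : ℝ := ∑ i, (‖p i - p' i‖ + |b i - b' i|) with hΔdef
  have hΔ0 : 0 ≤ Δ :=
    Finset.sum_nonneg fun i _ => add_nonneg (norm_nonneg _) (abs_nonneg _)
  clear_value Δ
  have key : ∀ X : Vec d, ‖X‖ ≤ R →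
      |moeLin A a h B C b p X - moeLin A a h B C b' p' X| ≤ C0 * Δ := by
    intro X hX
    have habs : ∀ (c : Fin L' → ℝ) (q : Fin L' → Vec d), (∀ i, (c i, q i) ∈ Ω) →
        ∀ i, |bilin B (q i) X + c i| ≤ M0 := by
      intro c q hcq i
      have h2 := (hΩK _ (hcq i)).1
      have h3 := (hΩK _ (hcq i)).2
      have hb1 : |bilin B (q i) X| ≤ CB * (K * R) := by
        refine (hCBle (q i) X).trans ?_
        exact mul_le_mul_of_nonneg_left
          (mul_le_mul h3 hX (norm_nonneg _) hK) hCB0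
      calc |bilin B (q i) X + c i| ≤ |bilin B (q i) X| + |c i| := abs_add_le _ _
        _ ≤ CB * (K * R) + K := add_le_add hb1 h2
        _ = M0 := hM0def.symm
    have hSlow : ∀ (c : Fin L' → ℝ) (q : Fin L' → Vec d), (∀ i, (c i, q i) ∈ Ω) →
        δ ≤ ∑ i, Real.exp (bilin B (q i) X + c i) := by
      intro c q hcq
      have h1 : δ ≤ Real.exp (bilin B (q ⟨0, hL⟩) X + c ⟨0, hL⟩) := by
        rw [hδdef]
        apply Real.exp_le_exp.2
        have := (abs_le.1 (habs c q hcq ⟨0, hL⟩)).1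
        linarith
      refine h1.trans ?_
      exact Finset.single_le_sum (f := fun i => Real.exp (bilin B (q i) X + c i))
        (fun i _ => (Real.exp_pos _).le) (Finset.mem_univ (⟨0, hL⟩ : Fin L'))
    have hTbd : ∀ (c : Fin L' → ℝ) (q : Fin L' → Vec d), (∀ i, (c i, q i) ∈ Ω) →
        |∑ i, Real.exp (bilin B (q i) X + c i) * rowMul C (q i)| ≤ MT := by
      intro c q hcq
      refine (Finset.abs_sum_le_sum_abs _ _).trans ?_
      have hterm : ∀ i : Fin L', |Real.exp (bilin B (q i) X + c i) * rowMul C (q i)| ≤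
          Real.exp M0 * (CC * K) := by
        intro i
        rw [abs_mul, abs_of_pos (Real.exp_pos _)]
        apply mul_le_mul
        · exact Real.exp_le_exp.2 ((le_abs_self _).trans (habs c q hcq i))
        · exact (hCCle (q i)).trans
            (mul_le_mul_of_nonneg_left (hΩK _ (hcq i)).2 hCC0)
        · exact abs_nonneg _
        · exact (Real.exp_pos _).le
      calc ∑ i, |Real.exp (bilin B (q i) X + c i) * rowMul C (q i)|
          ≤ ∑ _i : Fin L', Real.exp M0 * (CC * K) :=
            Finset.sum_le_sum fun i _ => hterm i
        _ = MT := by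
            rw [Finset.sum_const, Finset.card_univ, Fintype.card_fin, nsmul_eq_mul, hMTdef]
    have hE0 : 0 ≤ ∑ j, Real.exp (quadForm (A j) X + a j) :=
      Finset.sum_nonneg fun j _ => (Real.exp_pos _).le
    have hexplip : ∀ i : Fin L',
        |Real.exp (bilin B (p i) X + b i) - Real.exp (bilin B (p' i) X + b' i)| ≤
          L1 * (‖p i - p' i‖ + |b i - b' i|) := by
      intro i
      have e1 : |Real.exp (bilin B (p i) X + b i) - Real.exp (bilin B (p' i) X + b' i)| ≤
          Real.exp M0 * |(bilin B (p i) X + b i) - (bilin B (p' i) X + b' i)| :=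
        exp_lip ((le_abs_self _).trans (habs b p hbp i))
          ((le_abs_self _).trans (habs b' p' hbp' i))
      have e2 : |(bilin B (p i) X + b i) - (bilin B (p' i) X + b' i)| ≤
          CB * R * ‖p i - p' i‖ + |b i - b' i| := by
        have e3 : (bilin B (p i) X + b i) - (bilin B (p' i) X + b' i) =
            bilin B (p i - p' i) X + (b i - b' i) := by
          rw [← bilin_sub]; ring
        rw [e3]
        refine (abs_add_le _ _).trans (add_le_add ?_ le_rfl)
        refine (hCBle _ X).trans ?_
        calc CB * (‖p i - p' i‖ * ‖X‖) ≤ CB * (‖p i - p' i‖ * R) := by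
              apply mul_le_mul_of_nonneg_left _ hCB0
              exact mul_le_mul_of_nonneg_left hX (norm_nonneg _)
          _ = CB * R * ‖p i - p' i‖ := by ring
      refine (e1.trans (mul_le_mul_of_nonneg_left e2 (Real.exp_pos _).le)).trans ?_
      rw [hL1def]
      have hnp : (0:ℝ) ≤ ‖p i - p' i‖ := norm_nonneg _
      have hnb : (0:ℝ) ≤ |b i - b' i| := abs_nonneg _
      have h4 : CB * R * ‖p i - p' i‖ + |b i - b' i| ≤
          (CB * R + 1) * (‖p i - p' i‖ + |b i - b' i|) := by
        nlinarith [mul_nonneg hCB0 hR]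
      calc Real.exp M0 * (CB * R * ‖p i - p' i‖ + |b i - b' i|)
          ≤ Real.exp M0 * ((CB * R + 1) * (‖p i - p' i‖ + |b i - b' i|)) :=
            mul_le_mul_of_nonneg_left h4 (Real.exp_pos _).le
        _ = Real.exp M0 * (CB * R + 1) * (‖p i - p' i‖ + |b i - b' i|) := by ring
    have hSdiff : |(∑ i, Real.exp (bilin B (p i) X + b i)) -
        ∑ i, Real.exp (bilin B (p' i) X + b' i)| ≤ L1 * Δ := by
      rw [← Finset.sum_sub_distrib]
      refine (Finset.abs_sum_le_sum_abs _ _).trans ?_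
      rw [hΔdef, Finset.mul_sum]
      exact Finset.sum_le_sum fun i _ => hexplip i
    have hTdiff : |(∑ i, Real.exp (bilin B (p i) X + b i) * rowMul C (p i)) -
        ∑ i, Real.exp (bilin B (p' i) X + b' i) * rowMul C (p' i)| ≤ L2 * Δ := by
      rw [← Finset.sum_sub_distrib]
      refine (Finset.abs_sum_le_sum_abs _ _).trans ?_
      rw [hΔdef, Finset.mul_sum]
      refine Finset.sum_le_sum fun i _ => ?_
      have hdecomp : Real.exp (bilin B (p i) X + b i) * rowMul C (p i) -
          Real.exp (bilin B (p' i) X + b' i) * rowMul C (p' i) =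
          (Real.exp (bilin B (p i) X + b i) - Real.exp (bilin B (p' i) X + b' i)) *
              rowMul C (p i) +
            Real.exp (bilin B (p' i) X + b' i) * (rowMul C (p i) - rowMul C (p' i)) := by
        ring
      rw [hdecomp]
      refine (abs_add_le _ _).trans ?_
      have hrm : |rowMul C (p i)| ≤ CC * K :=
        (hCCle (p i)).trans (mul_le_mul_of_nonneg_left (hΩK _ (hbp i)).2 hCC0)
      have hrd : |rowMul C (p i) - rowMul C (p' i)| ≤ CC * ‖p i - p' i‖ := by
        rw [rowMul_sub]
        exact hCCle _
      have t1 : |(Real.exp (bilin B (p i) X + b i) - Real.exp (bilin B (p' i) X + b' i)) *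
          rowMul C (p i)| ≤
          L1 * (‖p i - p' i‖ + |b i - b' i|) * (CC * K) := by
        rw [abs_mul]
        exact mul_le_mul (hexplip i) hrm (abs_nonneg _)
          (mul_nonneg hL1.le (add_nonneg (norm_nonneg _) (abs_nonneg _)))
      have t2 : |Real.exp (bilin B (p' i) X + b' i) * (rowMul C (p i) - rowMul C (p' i))| ≤
          Real.exp M0 * (CC * ‖p i - p' i‖) := by
        rw [abs_mul, abs_of_pos (Real.exp_pos _)]
        apply mul_le_mul _ hrd (abs_nonneg _) (Real.exp_pos _).le
        exact Real.exp_le_exp.2 ((le_abs_self _).trans (habs b' p' hbp' i))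
      refine (add_le_add t1 t2).trans ?_
      rw [hL2def]
      have hnp : (0:ℝ) ≤ ‖p i - p' i‖ := norm_nonneg _
      have hnb : (0:ℝ) ≤ |b i - b' i| := abs_nonneg _
      have hE : (0:ℝ) < Real.exp M0 := Real.exp_pos _
      nlinarith [mul_nonneg hCC0 hK, hL1.le, mul_nonneg (mul_nonneg hE.le hCC0) hnb]
    simp only [moeLin]
    set E : ℝ := ∑ j, Real.exp (quadForm (A j) X + a j) with hEdef
    set H : ℝ := ∑ j, Real.exp (quadForm (A j) X + a j) * h j X with hHdef
    set SB : ℝ := ∑ i, Real.exp (bilin B (p i) X + b i) with hSBdef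
    set SB' : ℝ := ∑ i, Real.exp (bilin B (p' i) X + b' i) with hSB'def
    set TB : ℝ := ∑ i, Real.exp (bilin B (p i) X + b i) * rowMul C (p i) with hTBdef
    set TB' : ℝ := ∑ i, Real.exp (bilin B (p' i) X + b' i) * rowMul C (p' i) with hTB'def
    have hSlow1 : δ ≤ SB := hSlow b p hbp
    have hSlow1' : δ ≤ SB' := hSlow b' p' hbp'
    have hTbd1' : |TB'| ≤ MT := hTbd b' p' hbp'
    have hH1 : |H| ≤ MH := hMHle X hX
    clear_value E H SB SB' TB TB'
    have hG : δ ≤ E + SB := le_add_of_nonneg_of_le hE0 hSlow1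
    have hG' : δ ≤ E + SB' := le_add_of_nonneg_of_le hE0 hSlow1'
    have hGpos : 0 < E + SB := lt_of_lt_of_le hδ hG
    have hG'pos : 0 < E + SB' := lt_of_lt_of_le hδ hG'
    have hF'bd : |H + TB'| ≤ MF := by
      rw [hMFdef]
      exact (abs_add_le _ _).trans (add_le_add hH1 hTbd1')
    have step : (H + TB) / (E + SB) - (H + TB') / (E + SB') =
        (TB - TB') / (E + SB) +
          (H + TB') * ((E + SB') - (E + SB)) / ((E + SB) * (E + SB')) := by
      field_simp [hGpos.ne', hG'pos.ne']
      ring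
    rw [step]
    have part1 : |(TB - TB') / (E + SB)| ≤ (L2 * Δ) / δ := by
      rw [abs_div, abs_of_pos hGpos]
      exact div_le_div₀ (mul_nonneg hL2 hΔ0) hTdiff hδ hG
    have part2 : |(H + TB') * ((E + SB') - (E + SB)) / ((E + SB) * (E + SB'))| ≤
        MF * (L1 * Δ) / (δ * δ) := by
      rw [abs_div, abs_of_pos (mul_pos hGpos hG'pos), abs_mul]
      apply div_le_div₀ (mul_nonneg hMF0 (mul_nonneg hL1.le hΔ0)) _ (mul_pos hδ hδ)
        (mul_le_mul hG hG' hδ.le hGpos.le)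
      apply mul_le_mul hF'bd _ (abs_nonneg _) hMF0
      have he : (E + SB') - (E + SB) = SB' - SB := by ring
      rw [he, abs_sub_comm]
      exact hSdiff
    refine ((abs_add_le _ _).trans (add_le_add part1 part2)).trans (le_of_eq ?_)
    have hδne : δ ≠ 0 := hδ.ne'
    rw [hC0def]
    field_simp
  have hbound : ∀ᵐ X ∂μ,
      ‖moeLin A a h B C b p X - moeLin A a h B C b' p' X‖ ≤ max C0 1 * Δ := by
    refine hRae.mono fun X hX => ?_
    rw [Real.norm_eq_abs]
    exact (key X hX).trans (mul_le_mul_of_nonneg_right (le_max_left _ _) hΔ0)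
  calc eLpNorm (fun X => moeLin A a h B C b p X - moeLin A a h B C b' p' X) 2 μ
      ≤ μ Set.univ ^ (2 : ℝ≥0∞).toReal⁻¹ * ENNReal.ofReal (max C0 1 * Δ) :=
        eLpNorm_le_of_ae_bound hbound
    _ = ENNReal.ofReal (max C0 1 * Δ) := by
        simp [measure_univ]

end
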